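/- (Lemma 3.4.) Every edge f ∈ E1 with f ∉ spine1(e1*) is protected under the merge: the SLD parent of f computed in G equals the SLD parent of f computed in G1, i.e., p(f) = p1(f) (in particular, p(f) is defined iff p1(f) is). Symmetrically, every f ∈ E2 with f ∉ spine2(e2*) satisfies p(f) = p2(f). -/

import Mathlib

/- Single tree setting: `G` is a finite tree with injective edge ranks `r`.
`edgesBetween G e f` is the set of edges strictly between edges `e` and `f`
on the unique tree path connecting them (an edge `g ∉ {e,f}` lies on this path
iff it belongs to every walk containing both `e` and `f`). -/

open SimpleGraph

variable {V : Type*}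

/-- The set of edges lying strictly between edges `e` and `f` on the tree path
connecting them (excluding `e` and `f`). -/
def edgesBetween (G : SimpleGraph V) (e f : Sym2 V) : Set (Sym2 V) :=
  {g | g ∈ G.edgeSet ∧ g ≠ e ∧ g ≠ f ∧
    ∀ (a b : V) (w : G.Walk a b), e ∈ w.edges → f ∈ w.edges → g ∈ w.edges}

/-- `f` is an adjacent superior of `e`: `r e < r f` and every edge `g` on the
path between `e` and `f` satisfies `r g < r e`. -/
def AdjSup (G : SimpleGraph V) (r : Sym2 V → ℕ) (e f : Sym2 V) : Prop :=
  f ∈ G.edgeSet ∧ r e < r f ∧ ∀ g ∈ edgesBetween G e f, r g < r e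

/-- `f` is an adjacent inferior of `e`: `r f < r e` and every edge `g` on the
path between `e` and `f` satisfies `r g < r e`. -/
def AdjInf (G : SimpleGraph V) (r : Sym2 V → ℕ) (e f : Sym2 V) : Prop :=
  f ∈ G.edgeSet ∧ r f < r e ∧ ∀ g ∈ edgesBetween G e f, r g < r e

/-- `f` is the SLD parent of `e`: the minimum-rank adjacent superior of `e`. -/
def IsParent (G : SimpleGraph V) (r : Sym2 V → ℕ) (e f : Sym2 V) : Prop :=
  AdjSup G r e f ∧ ∀ g, AdjSup G r e g → r f ≤ r g

/-- The spine of `e`: the set of edges obtained by iterating the SLD parent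
function starting from `e` (including `e` itself). -/
def spine (G : SimpleGraph V) (r : Sym2 V → ℕ) (e : Sym2 V) : Set (Sym2 V) :=
  {f | Relation.ReflTransGen (IsParent G r) e f}

section AuxSLD
variable {G : SimpleGraph V}

-- endpoints of an edge in a walk are in the support
lemma mem_support_of_mem_edges {a b : V} (w : G.Walk a b) {e : Sym2 V} (he : e ∈ w.edges)
    {x : V} (hx : x ∈ e) : x ∈ w.support := by
  induction e with
  | h p q =>
    rcases Sym2.mem_iff.mp hx with rfl | rfl
    · exact w.fst_mem_support_of_mem_edges he
    · exact w.snd_mem_support_of_mem_edges he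

-- a walk between two support vertices whose edges are among the original's
lemma exists_subwalk [DecidableEq V] {a b : V} (w : G.Walk a b) {x y : V}
    (hx : x ∈ w.support) (hy : y ∈ w.support) :
    ∃ w' : G.Walk x y, ∀ e ∈ w'.edges, e ∈ w.edges := by
  by_cases hy2 : y ∈ (w.dropUntil x hx).support
  · refine ⟨(w.dropUntil x hx).takeUntil y hy2, fun e he => ?_⟩
    exact w.edges_dropUntil_subset hx ((w.dropUntil x hx).edges_takeUntil_subset hy2 he)
  · have hy1 : y ∈ (w.takeUntil x hx).support := by
      have := w.take_spec hx
      rw [← this, Walk.mem_support_append_iff] at hy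
      tauto
    refine ⟨((w.takeUntil x hx).dropUntil y hy1).reverse, fun e he => ?_⟩
    rw [Walk.edges_reverse, List.mem_reverse] at he
    exact w.edges_takeUntil_subset hx ((w.takeUntil x hx).edges_dropUntil_subset hy1 he)

-- split a walk at first occurrence of an edge
lemma split_first_edge [DecidableEq V] {a b : V} (w : G.Walk a b) {x : Sym2 V}
    (hx : x ∈ w.edges) :
    ∃ (c d : V) (h : G.Adj c d) (w1 : G.Walk a c) (w2 : G.Walk d b),
      w = w1.append (Walk.cons h w2) ∧ s(c, d) = x ∧ x ∉ w1.edges := by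
  induction w with
  | nil => simp at hx
  | @cons p q s hadj u ih =>
    by_cases hfirst : s(p, q) = x
    · exact ⟨p, q, hadj, Walk.nil, u, by simp, hfirst, by simp⟩
    · have hx' : x ∈ u.edges := by
        have : x = s(p, q) ∨ x ∈ u.edges := by simpa using hx
        exact this.resolve_left (fun hh => hfirst hh.symm)
      obtain ⟨c, d, h', w1, w2, hdec, hcd, hnot⟩ := ih hx'
      exact ⟨c, d, h', Walk.cons hadj w1, w2, by rw [Walk.cons_append, hdec],
        hcd, by simp only [Walk.edges_cons, List.mem_cons, not_or]; exact ⟨fun hh => hfirst hh.symm, hnot⟩⟩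

section MinWalk
variable {e f m : Sym2 V}

/-- Core list-style argument ("case A"). -/
lemma between_caseA [DecidableEq V] {a b : V} (w : G.Walk a b) {T Y : List (Sym2 V)}
    (h1 : w.edges = e :: T) (h2 : w.edges = Y ++ [f]) (hfY : f ∉ Y)
    (hm : m ∈ w.edges) (hme : m ≠ e) (hmf : m ≠ f)
    (huniv : ∀ (x y : V) (W : G.Walk x y), e ∈ W.edges → m ∈ W.edges → f ∈ W.edges) :
    False := by
  obtain ⟨c, d, hadj, w1, w2, hdec, hcd, hnot⟩ := split_first_edge w hm
  have hedges : w1.edges ++ (m :: w2.edges) = w.edges := by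
    rw [hdec]; simp [hcd]
  -- e ∈ w1.edges
  have he1 : e ∈ w1.edges := by
    rcases List.eq_nil_or_concat w1.edges with hnil | _
    · rw [hnil] at hedges
      simp only [List.nil_append] at hedges
      rw [h1] at hedges
      exact absurd (List.head_eq_of_cons_eq hedges) hme
    · have : w1.edges.head? = some e := by
        have := hedges
        rw [h1] at this
        rcases hh : w1.edges with hnil2 | ⟨z, zs⟩
        · rw [hh] at hedges; simp only [List.nil_append] at hedges
          rw [h1] at hedges
          exact absurd (List.head_eq_of_cons_eq hedges) hme
        · rw [hh] at this
          simp only [List.cons_append] at this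
          rw [List.head_eq_of_cons_eq this]
          rfl
      exact List.mem_of_mem_head? (by rw [this]; rfl)
  -- the walk w1 ++ [m] contains e and m, so also f
  have hf1 : f ∈ (w1.append (Walk.cons hadj Walk.nil)).edges := by
    apply huniv
    · simp [he1]
    · simp [hcd]
  have hfw1 : f ∈ w1.edges := by
    simp only [Walk.edges_append, Walk.edges_cons, Walk.edges_nil, List.mem_append,
      List.mem_cons, List.not_mem_nil, or_false] at hf1
    rcases hf1 with h | h
    · exact h
    · exact absurd (h.trans hcd) (Ne.symm hmf)
  -- but f only occurs at the very end
  have h3 : w1.edges ++ (m :: w2.edges) = Y ++ [f] := by rw [hedges, h2]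
  have hlen : w1.edges.length ≤ Y.length := by
    have := congrArg List.length h3
    rw [List.length_append, List.length_append, List.length_cons, List.length_singleton] at this
    omega
  have : w1.edges = Y.take w1.edges.length := by
    have := congrArg (List.take w1.edges.length) h3
    rwa [List.take_left, List.take_append_of_le_length hlen] at this
  exact hfY (List.take_subset _ _ (this ▸ hfw1))

end MinWalk

section L3
variable {e f m : Sym2 V}

lemma min_walk_head {a b : V} (w : G.Walk a b) (he : e ∈ w.edges) (hf : f ∈ w.edges)
    (hef : e ≠ f)
    (hmin : ∀ (x y : V) (w' : G.Walk x y), e ∈ w'.edges → f ∈ w'.edges →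
      w.length ≤ w'.length) :
    ∃ T, (w.edges = e :: T ∧ e ∉ T) ∨ (w.edges = f :: T ∧ f ∉ T) := by
  cases w with
  | nil => simp at he
  | cons hadj u =>
    rename_i c
    refine ⟨u.edges, ?_⟩
    have hnotboth : ¬(e ∈ u.edges ∧ f ∈ u.edges) := by
      rintro ⟨h1, h2⟩
      have := hmin _ _ u h1 h2
      simp only [Walk.length_cons] at this
      omega
    rcases Classical.em (e ∈ u.edges) with h1 | h1
    · have h2 : f ∉ u.edges := fun hh => hnotboth ⟨h1, hh⟩
      have : f = s(a, c) := by
        have : f ∈ s(a, c) :: u.edges := by simpa using hf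
        rcases List.mem_cons.mp this with hq | hq
        · exact hq
        · exact absurd hq h2
      right
      exact ⟨by simp [← this], h2⟩
    · have : e = s(a, c) := by
        have : e ∈ s(a, c) :: u.edges := by simpa using he
        rcases List.mem_cons.mp this with hq | hq
        · exact hq
        · exact absurd hq h1
      left
      exact ⟨by simp [← this], h1⟩

lemma not_between_swap [DecidableEq V] (hW : ∃ (a b : V) (w : G.Walk a b), e ∈ w.edges ∧ f ∈ w.edges)
    (hm : m ∈ edgesBetween G e f) : f ∉ edgesBetween G e m := by
  intro hf
  have hme : m ≠ e := hm.2.1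
  have hmf : m ≠ f := hm.2.2.1
  have hfe : f ≠ e := hf.2.1
  -- minimal-length walk containing e and f
  obtain ⟨a0, b0, w0, he0, hf0⟩ := hW
  set S : Set ℕ := {n | ∃ (x y : V) (w : G.Walk x y), e ∈ w.edges ∧ f ∈ w.edges ∧ w.length = n}
    with hS
  have hSne : S.Nonempty := ⟨w0.length, a0, b0, w0, he0, hf0, rfl⟩
  obtain ⟨a, b, w, he, hf', hlen⟩ := Nat.sInf_mem hSne
  have hmin : ∀ (x y : V) (w' : G.Walk x y), e ∈ w'.edges → f ∈ w'.edges →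
      w.length ≤ w'.length := by
    intro x y w' h1 h2
    rw [hlen]
    exact Nat.sInf_le ⟨x, y, w', h1, h2, rfl⟩
  have hmw : m ∈ w.edges := hm.2.2.2 _ _ w he hf'
  have huniv : ∀ (x y : V) (W : G.Walk x y), e ∈ W.edges → m ∈ W.edges → f ∈ W.edges :=
    fun x y W h1 h2 => hf.2.2.2 x y W h1 h2
  -- head decomposition of w and of w.reverse
  obtain ⟨T, hT⟩ := min_walk_head w he hf' (Ne.symm hfe) hmin
  obtain ⟨T', hT'⟩ := min_walk_head w.reverse (by simpa using he) (by simpa using hf')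
    (Ne.symm hfe) (by intro x y w' h1 h2; simpa using hmin x y w' h1 h2)
  have hrev : w.reverse.edges = w.edges.reverse := Walk.edges_reverse w
  rcases hT with ⟨hT1, hT2⟩ | ⟨hT1, hT2⟩ <;> rcases hT' with ⟨hT1', hT2'⟩ | ⟨hT1', hT2'⟩
  · -- e first, e last
    have hYe : w.edges = T'.reverse ++ [e] := by
      have := congrArg List.reverse (hrev ▸ hT1')
      simpa using this
    rw [hT1] at hYe
    rcases hh : T'.reverse with _ | ⟨z, zs⟩
    · rw [hh] at hYe
      simp at hYe
      have : f ∈ w.edges := hf'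
      rw [hT1, hYe] at this
      simp at this
      exact hfe this
    · rw [hh] at hYe
      have : e = z := List.head_eq_of_cons_eq hYe
      have : e ∈ T'.reverse := by rw [hh, this]; exact List.mem_cons_self
      exact hT2' (by simpa using this)
  · -- e first, f last : case A
    have hYf : w.edges = T'.reverse ++ [f] := by
      have := congrArg List.reverse (hrev ▸ hT1')
      simpa using this
    exact between_caseA w hT1 hYf (by simpa using hT2') hmw hme hmf huniv
  · -- f first, e last : apply case A to w.reverse
    have h1' : w.reverse.edges = e :: T' := hT1'
    have h2' : w.reverse.edges = T.reverse ++ [f] := by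
      rw [hrev, hT1]
      simp
    exact between_caseA w.reverse h1' h2' (by simpa using hT2)
      (by simpa using hmw) hme hmf huniv
  · -- f first, f last
    have hYf : w.edges = T'.reverse ++ [f] := by
      have := congrArg List.reverse (hrev ▸ hT1')
      simpa using this
    rw [hT1] at hYf
    rcases hh : T'.reverse with _ | ⟨z, zs⟩
    · rw [hh] at hYf
      simp at hYf
      have : e ∈ w.edges := he
      rw [hT1, hYf] at this
      simp at this
      exact hfe this.symm
    · rw [hh] at hYf
      have : f = z := List.head_eq_of_cons_eq hYf
      have : f ∈ T'.reverse := by rw [hh, this]; exact List.mem_cons_self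
      exact hT2' (by simpa using this)

end L3

section Splice

lemma between_triangle [DecidableEq V] {e p f x : Sym2 V}
    (hx : x ∈ edgesBetween G p f) :
    x = e ∨ x ∈ edgesBetween G e p ∨ x ∈ edgesBetween G e f := by
  by_contra hc
  push_neg at hc
  obtain ⟨hxe, hxp, hxf⟩ := hc
  obtain ⟨hxE, hxnp, hxnf, hxuniv⟩ := hx
  have h1 : ∃ (a b : V) (w : G.Walk a b), e ∈ w.edges ∧ p ∈ w.edges ∧ x ∉ w.edges := by
    unfold edgesBetween at hxp
    simp only [Set.mem_setOf_eq, not_and] at hxp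
    have := hxp hxE hxe hxnp
    push_neg at this
    exact this
  have h2 : ∃ (a b : V) (w : G.Walk a b), e ∈ w.edges ∧ f ∈ w.edges ∧ x ∉ w.edges := by
    unfold edgesBetween at hxf
    simp only [Set.mem_setOf_eq, not_and] at hxf
    have := hxf hxE hxe hxnf
    push_neg at this
    exact this
  obtain ⟨a1, b1, w1, he1, hp1, hx1⟩ := h1
  obtain ⟨a2, b2, w2, he2, hf2, hx2⟩ := h2
  set α := e.out.1 with hα
  have hαe : α ∈ e := Sym2.out_fst_mem e
  have hα1 : α ∈ w1.support := mem_support_of_mem_edges w1 he1 hαe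
  have hα2 : α ∈ w2.support := mem_support_of_mem_edges w2 he2 hαe
  set F1 : G.Walk α b1 := (w1.takeUntil α hα1).reverse.append w1 with hF1
  set F2 : G.Walk α b2 := (w2.takeUntil α hα2).reverse.append w2 with hF2
  set W : G.Walk b1 b2 := F1.reverse.append F2 with hW
  have hWp : p ∈ W.edges := by
    simp only [hW, hF1, Walk.edges_append, Walk.edges_reverse, List.mem_append,
      List.mem_reverse]
    tauto
  have hWf : f ∈ W.edges := by
    simp only [hW, hF2, Walk.edges_append, Walk.edges_reverse, List.mem_append,
      List.mem_reverse]
    tauto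
  have hx1' : x ∉ (w1.takeUntil α hα1).edges := fun h => hx1 (w1.edges_takeUntil_subset hα1 h)
  have hx2' : x ∉ (w2.takeUntil α hα2).edges := fun h => hx2 (w2.edges_takeUntil_subset hα2 h)
  have hWx : x ∉ W.edges := by
    simp only [hW, hF1, hF2, Walk.edges_append, Walk.edges_reverse, List.mem_append,
      List.mem_reverse]
    tauto
  exact hWx (hxuniv _ _ W hWp hWf)

end Splice

section SP
variable [Fintype V] [DecidableEq V] {T : SimpleGraph V} {r : Sym2 V → ℕ}

lemma spine_ascend
    (hinj : Set.InjOn r T.edgeSet)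
    (hconn : ∀ e f, e ∈ T.edgeSet → f ∈ T.edgeSet →
      ∃ (a b : V) (w : T.Walk a b), e ∈ w.edges ∧ f ∈ w.edges) :
    ∀ (n : ℕ) (e f : Sym2 V), e ∈ T.edgeSet → f ∈ T.edgeSet → r e < r f → r f - r e ≤ n →
      (∀ x ∈ edgesBetween T e f, r x < r f) → f ∈ spine T r e := by
  intro n
  induction n with
  | zero => intro e f _ _ hlt hle _; omega
  | succ n ih =>
    intro e f heE hfE hlt hle hbet
    set S' : Set (Sym2 V) := {m | (m ∈ edgesBetween T e f ∨ m = f) ∧ r e < r m} with hS'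
    have hfS : f ∈ S' := ⟨Or.inr rfl, hlt⟩
    have hS'edge : ∀ m ∈ S', m ∈ T.edgeSet := by
      rintro m ⟨h | rfl, _⟩
      · exact h.1
      · exact hfE
    obtain ⟨m0, hm0S, hm0min⟩ := Set.exists_min_image S'
      (fun m => ((S' ∩ edgesBetween T e m).toFinite.toFinset).card)
      (Set.toFinite S') ⟨f, hfS⟩
    -- no element of S' lies between e and m0
    have hnob : ∀ x ∈ S', x ∉ edgesBetween T e m0 := by
      intro x hxS hxb
      have hsub : (S' ∩ edgesBetween T e x) ⊆ (S' ∩ edgesBetween T e m0) := by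
        rintro y ⟨hyS, hyb⟩
        refine ⟨hyS, hyb.1, hyb.2.1, ?_, ?_⟩
        · intro hym
          exact not_between_swap (hconn e m0 heE (hS'edge m0 hm0S)) hxb (hym ▸ hyb)
        · intro a b W hE hM
          exact hyb.2.2.2 a b W hE (hxb.2.2.2 a b W hE hM)
      have hxin : x ∈ (S' ∩ edgesBetween T e m0) := ⟨hxS, hxb⟩
      have hxout : x ∉ (S' ∩ edgesBetween T e x) := fun h => h.2.2.2.1 rfl
      have hss0 : (S' ∩ edgesBetween T e x) ⊂ (S' ∩ edgesBetween T e m0) :=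
        Set.ssubset_iff_subset_ne.mpr ⟨hsub, fun heq => hxout (heq ▸ hxin)⟩
      have hss : (S' ∩ edgesBetween T e x).toFinite.toFinset ⊂
          (S' ∩ edgesBetween T e m0).toFinite.toFinset := by
        rw [Set.Finite.toFinset_ssubset_toFinset]
        exact hss0
      have := Finset.card_lt_card hss
      have := hm0min x hxS
      omega
    -- m0 is an adjacent superior of e
    have hadj : AdjSup T r e m0 := by
      refine ⟨hS'edge m0 hm0S, hm0S.2, ?_⟩
      intro x hxb
      have hxf : x ≠ f := by
        intro heq
        rcases hm0S.1 with h | hh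
        · exact not_between_swap (hconn e f heE hfE) h (heq ▸ hxb)
        · rw [heq, hh] at hxb
          exact hxb.2.2.1 rfl
      have hxbef : x ∈ edgesBetween T e f := by
        refine ⟨hxb.1, hxb.2.1, hxf, ?_⟩
        intro a b W hE hF
        rcases hm0S.1 with h | hh
        · exact hxb.2.2.2 a b W hE (h.2.2.2 a b W hE hF)
        · exact hxb.2.2.2 a b W hE (hh ▸ hF)
      rcases lt_or_ge (r x) (r e) with h | h
      · exact h
      · exfalso
        have hne : r x ≠ r e := fun hh => hxb.2.1 (hinj hxbef.1 heE hh)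
        exact hnob x ⟨Or.inl hxbef, lt_of_le_of_ne h (Ne.symm hne)⟩ hxb
    -- the parent of e
    obtain ⟨p, hpA, hpmin⟩ := Set.exists_min_image {g' | AdjSup T r e g'} r
      (Set.toFinite _) ⟨m0, hadj⟩
    have hP : IsParent T r e p := ⟨hpA, fun g hg => hpmin g hg⟩
    have hrpm0 : r p ≤ r m0 := hpmin m0 hadj
    have hrm0f : r m0 ≤ r f := by
      rcases hm0S.1 with h | rfl
      · exact le_of_lt (hbet m0 h)
      · exact le_refl _
    by_cases hpf : p = f
    · exact hpf ▸ Relation.ReflTransGen.single hP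
    · have hrpf : r p < r f :=
        lt_of_le_of_ne (le_trans hrpm0 hrm0f) (fun hh => hpf (hinj hpA.1 hfE hh))
      have hbound' : ∀ x ∈ edgesBetween T p f, r x < r f := by
        intro x hx
        rcases between_triangle (e := e) hx with rfl | h | h
        · exact hlt
        · exact lt_trans (hpA.2.2 x h) hlt
        · exact hbet x h
      have hrep : r e < r p := hpA.2.1
      have : f ∈ spine T r p := ih p f hpA.1 hfE hrpf (by omega) hbound'
      exact Relation.ReflTransGen.head hP this

end SP

section Merge
variable {G1 G2 : SimpleGraph V} {v : V}

open Classical in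
/-- Projection of vertices: collapse `G2`'s support to `v`. -/
noncomputable def piv (G2 : SimpleGraph V) (v : V) (x : V) : V :=
  if x ∈ G2.support then v else x

lemma piv_eq_self (hsupp : G1.support ∩ G2.support = {v}) {x : V}
    (hx : x ∈ G1.support) : piv G2 v x = x := by
  unfold piv
  split
  · rename_i h
    have : x ∈ ({v} : Set V) := hsupp ▸ ⟨hx, h⟩
    exact this.symm
  · rfl

lemma piv_eq_v {x : V} (hx : x ∈ G2.support) : piv G2 v x = v := by
  unfold piv
  split
  · rfl
  · exact absurd hx (by assumption)

lemma piv_v : piv G2 v v = v := by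
  unfold piv
  split <;> rfl

open Classical in
/-- Projection of a walk in `G1 ⊔ G2` to a walk in `G1`. -/
noncomputable def projW (hsupp : G1.support ∩ G2.support = {v}) :
    ∀ {a b : V}, (G1 ⊔ G2).Walk a b → G1.Walk (piv G2 v a) (piv G2 v b)
  | _, _, Walk.nil => Walk.nil
  | _, _, @Walk.cons _ _ a c _ h w =>
    if he : G1.Adj a c then
      Walk.cons (by
        rw [piv_eq_self hsupp ⟨c, he⟩, piv_eq_self hsupp ⟨a, he.symm⟩]
        exact he) (projW hsupp w)
    else
      (projW hsupp w).copy (by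
        have h2 : G2.Adj a c := ((sup_adj _ _ _ _).mp h).resolve_left he
        rw [piv_eq_v ⟨c, h2⟩, piv_eq_v ⟨a, h2.symm⟩]) rfl

lemma projW_edges_subset (hsupp : G1.support ∩ G2.support = {v}) {a b : V}
    (w : (G1 ⊔ G2).Walk a b) : ∀ x ∈ (projW hsupp w).edges, x ∈ w.edges := by
  induction w with
  | nil => simp [projW]
  | @cons p q s h u ih =>
    rw [projW]
    split
    · rename_i he
      intro x hx
      have ha : piv G2 v p = p := piv_eq_self hsupp ⟨q, he⟩
      have hc : piv G2 v q = q := piv_eq_self hsupp ⟨p, he.symm⟩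
      rcases List.mem_cons.mp (by simpa using hx) with h1 | h1
      · rw [h1, ha, hc]
        simp
      · exact List.mem_cons_of_mem _ (ih x h1)
    · intro x hx
      rw [Walk.edges_copy] at hx
      exact List.mem_cons_of_mem _ (ih x hx)

lemma mem_projW_edges (hsupp : G1.support ∩ G2.support = {v}) {a b : V}
    (w : (G1 ⊔ G2).Walk a b) {x : Sym2 V} (hx : x ∈ w.edges) (hx1 : x ∈ G1.edgeSet) :
    x ∈ (projW hsupp w).edges := by
  induction w with
  | nil => simp at hx
  | @cons p q s h u ih =>
    rw [projW]
    rcases List.mem_cons.mp (by simpa using hx) with h1 | h1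
    · split
      · rename_i he
        have ha : piv G2 v p = p := piv_eq_self hsupp ⟨q, he⟩
        have hc : piv G2 v q = q := piv_eq_self hsupp ⟨p, he.symm⟩
        have hxx : x = s(piv G2 v p, piv G2 v q) := by rw [h1, ha, hc]
        rw [hxx]
        simp
      · rename_i he
        exact absurd (h1 ▸ hx1) (fun hh => he ((SimpleGraph.mem_edgeSet G1).mp hh))
    · split
      · simp only [Walk.edges_cons, List.mem_cons]
        exact Or.inr (ih h1)
      · rw [Walk.edges_copy]
        exact ih h1

lemma mem_projW_support (hsupp : G1.support ∩ G2.support = {v}) {a b : V}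
    (w : (G1 ⊔ G2).Walk a b) {x : V} (hx : x ∈ w.support) :
    piv G2 v x ∈ (projW hsupp w).support := by
  induction w with
  | nil =>
    simp only [Walk.support_nil, List.mem_singleton] at hx
    subst hx
    simp [projW]
  | @cons p q s h u ih =>
    rcases List.mem_cons.mp (by simpa using hx) with h1 | h1
    · subst h1
      rw [projW]
      split
      · exact Walk.start_mem_support _
      · rename_i he
        rw [Walk.support_copy]
        have h2 : G2.Adj x q := ((sup_adj _ _ _ _).mp h).resolve_left he
        have hp : piv G2 v x = v := piv_eq_v ⟨q, h2⟩
        have hq : piv G2 v q = v := piv_eq_v ⟨x, h2.symm⟩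
        obtain ⟨l, hl⟩ : ∃ l, (projW hsupp u).support = l := ⟨_, rfl⟩
        rw [hl, hp]
        have h3 : piv G2 v q ∈ l := hl ▸ Walk.start_mem_support _
        rwa [hq] at h3
    · rw [projW]
      split
      · simp only [Walk.support_cons, List.mem_cons]
        exact Or.inr (ih h1)
      · rw [Walk.support_copy]
        exact ih h1

end Merge

section Merge2
variable {G1 G2 : SimpleGraph V} {v : V}

/-- Walk in an induced subgraph yields a walk in the ambient graph. -/
def walkOut {s : Set V} : ∀ {x y : ↥s}, (G1.induce s).Walk x y → G1.Walk x.val y.val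
  | _, _, Walk.nil => Walk.nil
  | _, _, Walk.cons h w => Walk.cons (by exact h) (walkOut w)

lemma exists_walk_support (h1 : (G1.induce G1.support).IsTree) {x y : V}
    (hx : x ∈ G1.support) (hy : y ∈ G1.support) : Nonempty (G1.Walk x y) :=
  ⟨walkOut (h1.isConnected.preconnected ⟨x, hx⟩ ⟨y, hy⟩).some⟩

lemma edge_endpoint_support {e : Sym2 V} (he : e ∈ G1.edgeSet) {x : V} (hx : x ∈ e) :
    x ∈ G1.support := by
  induction e with
  | h p q =>
    have hadj : G1.Adj p q := (SimpleGraph.mem_edgeSet G1).mp he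
    rcases Sym2.mem_iff.mp hx with rfl | rfl
    · exact ⟨q, hadj⟩
    · exact ⟨p, hadj.symm⟩

lemma conn2 (h1 : (G1.induce G1.support).IsTree) {e f : Sym2 V}
    (he : e ∈ G1.edgeSet) (hf : f ∈ G1.edgeSet) :
    ∃ (a b : V) (w : G1.Walk a b), e ∈ w.edges ∧ f ∈ w.edges := by
  obtain ⟨⟨a1, a2⟩, rfl⟩ := e.exists_rep
  obtain ⟨⟨b1, b2⟩, rfl⟩ := f.exists_rep
  have hadj1 : G1.Adj a1 a2 := (SimpleGraph.mem_edgeSet G1).mp he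
  have hadj2 : G1.Adj b1 b2 := (SimpleGraph.mem_edgeSet G1).mp hf
  obtain ⟨w0⟩ := exists_walk_support h1 (⟨a1, hadj1.symm⟩ : a2 ∈ G1.support) ⟨b2, hadj2⟩
  refine ⟨a1, b2, Walk.cons hadj1 (w0.append (Walk.cons hadj2 Walk.nil)), ?_, ?_⟩
  · simp
  · simp

lemma walk_support_subset {x y : V} (w : G1.Walk x y) (hx : x ∈ G1.support) :
    ∀ z ∈ w.support, z ∈ G1.support := by
  induction w with
  | nil => intro z hz; simp at hz; rwa [hz]
  | @cons p q s h u ih =>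
    intro z hz
    rcases List.mem_cons.mp (by simpa using hz) with h1 | h1
    · rwa [h1]
    · exact ih ⟨p, h.symm⟩ z h1

/-- Lift a walk of `G1` whose support lies in `G1.support` to the induced graph. -/
def liftInduce : ∀ {x y : V} (w : G1.Walk x y) (hall : ∀ z ∈ w.support, z ∈ G1.support),
    (G1.induce G1.support).Walk ⟨x, hall x w.start_mem_support⟩ ⟨y, hall y w.end_mem_support⟩
  | _, _, Walk.nil, _ => Walk.nil
  | _, _, Walk.cons h w, hall => Walk.cons (by exact h)
      (liftInduce w (fun z hz => hall z (by simp [hz])))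

lemma liftInduce_edges {x y : V} (w : G1.Walk x y) (hall) :
    ∀ e' ∈ (liftInduce w hall).edges, Sym2.map Subtype.val e' ∈ w.edges := by
  induction w with
  | nil => intro e' he'; simp [liftInduce] at he'
  | @cons p q s h u ih =>
    intro e' he'
    rcases List.mem_cons.mp (show e' ∈ s(⟨p, hall p (by simp)⟩, ⟨q, hall q (by simp)⟩) :: (liftInduce u (fun z hz => hall z (by simp [hz]))).edges from he') with h1 | h1
    · rw [h1]
      simp
    · exact List.mem_cons_of_mem _ (ih _ e' h1)

/-- Every `G1`-edge is a "bridge" for walks in `G1 ⊔ G2`. -/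
lemma bridge1 (h1 : (G1.induce G1.support).IsTree)
    (hsupp : G1.support ∩ G2.support = {v}) {z t : V} (hzt : s(z, t) ∈ G1.edgeSet)
    (W : (G1 ⊔ G2).Walk z t) (hW : s(z, t) ∉ W.edges) : False := by
  have hadj : G1.Adj z t := (SimpleGraph.mem_edgeSet G1).mp hzt
  have hz : z ∈ G1.support := ⟨t, hadj⟩
  have ht : t ∈ G1.support := ⟨z, hadj.symm⟩
  let W1 : G1.Walk z t := (projW hsupp W).copy (piv_eq_self hsupp hz) (piv_eq_self hsupp ht)
  have hW1 : s(z, t) ∉ W1.edges := by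
    intro hmem
    rw [Walk.edges_copy] at hmem
    exact hW (projW_edges_subset hsupp W _ hmem)
  have hall := walk_support_subset W1 hz
  let W2 := liftInduce W1 hall
  have hbr : (G1.induce G1.support).IsBridge s(⟨z, hz⟩, ⟨t, ht⟩) := by
    apply isAcyclic_iff_forall_edge_isBridge.mp h1.IsAcyclic
    exact (SimpleGraph.mem_edgeSet _).mpr (by exact hadj)
  have := (isBridge_iff_adj_and_forall_walk_mem_edges.mp hbr) W2
  have := liftInduce_edges W1 hall _ this
  simp only [Sym2.map_pair_eq] at this
  exact hW1 this

end Merge2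

section Merge3
variable {G1 G2 : SimpleGraph V} {v : V}

lemma transfer_mem {G G' : SimpleGraph V} (hle : G ≤ G') {a b : V} (w : G.Walk a b) :
    ∃ w' : G'.Walk a b, w'.edges = w.edges :=
  ⟨w.transfer G' (fun e he => edgeSet_mono hle (w.edges_subset_edgeSet he)),
    w.edges_transfer _⟩

lemma start_cross (hsupp : G1.support ∩ G2.support = {v})
    (hdisj : Disjoint G1.edgeSet G2.edgeSet) :
    ∀ {c d : V} (W : (G1 ⊔ G2).Walk c d), c ∈ G1.support →
      (∃ y ∈ W.edges, y ∈ G2.edgeSet) → v ∈ W.support := by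
  intro c d W
  induction W with
  | nil => rintro _ ⟨y, hy, _⟩; simp at hy
  | @cons p q s h u ih =>
    rintro hp ⟨y, hy, hyE2⟩
    rcases (sup_adj _ _ _ _).mp h with hA1 | hA2
    · have hq : q ∈ G1.support := ⟨p, hA1.symm⟩
      have hy' : y ∈ u.edges := by
        rcases List.mem_cons.mp (by simpa using hy) with h1 | h1
        · exfalso
          exact Set.disjoint_left.mp hdisj (h1 ▸ (SimpleGraph.mem_edgeSet G1).mpr hA1 :
            y ∈ G1.edgeSet) hyE2
        · exact h1
      have := ih hq ⟨y, hy', hyE2⟩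
      simp only [Walk.support_cons, List.mem_cons]
      exact Or.inr this
    · have hpv : p = v := by
        have : p ∈ G1.support ∩ G2.support := ⟨hp, ⟨q, hA2⟩⟩
        rw [hsupp] at this
        exact this
      rw [← hpv]
      exact Walk.start_mem_support _

lemma cross_v [DecidableEq V] (hsupp : G1.support ∩ G2.support = {v})
    (hdisj : Disjoint G1.edgeSet G2.edgeSet) {a b : V} (W : (G1 ⊔ G2).Walk a b)
    {f g : Sym2 V} (hf : f ∈ W.edges) (hf1 : f ∈ G1.edgeSet)
    (hg : g ∈ W.edges) (hg2 : g ∈ G2.edgeSet) : v ∈ W.support := by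
  obtain ⟨⟨u1, u2⟩, rfl⟩ := f.exists_rep
  have hu1W : u1 ∈ W.support := W.fst_mem_support_of_mem_edges hf
  have hu1 : u1 ∈ G1.support := edge_endpoint_support hf1 (by simp)
  have hsplit : g ∈ (W.takeUntil u1 hu1W).edges ∨ g ∈ (W.dropUntil u1 hu1W).edges := by
    rw [← List.mem_append, ← Walk.edges_append, W.take_spec hu1W]
    exact hg
  rcases hsplit with h1 | h1
  · have := start_cross hsupp hdisj (W.takeUntil u1 hu1W).reverse hu1
      ⟨g, by simpa using h1, hg2⟩
    rw [Walk.support_reverse, List.mem_reverse] at this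
    exact W.support_takeUntil_subset hu1W this
  · have := start_cross hsupp hdisj (W.dropUntil u1 hu1W) hu1 ⟨g, h1, hg2⟩
    exact W.support_dropUntil_subset hu1W this

lemma insert_loop [DecidableEq V] {a b z : V} (W : G1.Walk a b) (hv : v ∈ W.support)
    (hadj : G1.Adj v z) :
    ∃ W' : G1.Walk a b, s(v, z) ∈ W'.edges ∧ (∀ x ∈ W.edges, x ∈ W'.edges) ∧
      ∀ x ∈ W'.edges, x ∈ W.edges ∨ x = s(v, z) := by
  refine ⟨(W.takeUntil v hv).append ((Walk.cons hadj (Walk.cons hadj.symm Walk.nil)).append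
    (W.dropUntil v hv)), ?_, ?_, ?_⟩
  · simp
  · intro x hx
    have := W.take_spec hv
    rw [← this, Walk.edges_append] at hx
    simp only [Walk.edges_append, Walk.edges_cons, Walk.edges_nil, List.mem_append,
      List.mem_cons]
    rcases List.mem_append.mp hx with h1 | h1
    · exact Or.inl h1
    · tauto
  · intro x hx
    have hiff : x ∈ W.edges ↔ x ∈ (W.takeUntil v hv).edges ∨ x ∈ (W.dropUntil v hv).edges := by
      rw [← List.mem_append, ← Walk.edges_append, W.take_spec hv]
    have hx' : x ∈ (W.takeUntil v hv).edges ∨ x = s(v, z) ∨ x = s(z, v) ∨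
        x ∈ (W.dropUntil v hv).edges := by
      simpa using hx
    rcases hx' with h1 | h1 | h1 | h1
    · exact Or.inl (hiff.mpr (Or.inl h1))
    · exact Or.inr h1
    · exact Or.inr (by rw [h1, Sym2.eq_swap])
    · exact Or.inl (hiff.mpr (Or.inr h1))



lemma main_half [Fintype V] (G1 G2 : SimpleGraph V) (v : V) (r : Sym2 V → ℕ) (e1s : Sym2 V)
    (h1 : (G1.induce G1.support).IsTree) (h2 : (G2.induce G2.support).IsTree)
    (hsupp : G1.support ∩ G2.support = {v})
    (hdisj : Disjoint G1.edgeSet G2.edgeSet)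
    (hr : Set.InjOn r (G1 ⊔ G2).edgeSet)
    (he1 : e1s ∈ G1.edgeSet ∧ v ∈ e1s ∧ ∀ f ∈ G1.edgeSet, v ∈ f → r e1s ≤ r f) :
    ∀ f ∈ G1.edgeSet, f ∉ spine G1 r e1s →
      ∀ g, IsParent (G1 ⊔ G2) r f g ↔ IsParent G1 r f g := by
  classical
  obtain ⟨he1E, he1v, he1min⟩ := he1
  have hle1 : G1 ≤ G1 ⊔ G2 := le_sup_left
  have hE1sub : G1.edgeSet ⊆ (G1 ⊔ G2).edgeSet := edgeSet_mono hle1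
  have hE2sub : G2.edgeSet ⊆ (G1 ⊔ G2).edgeSet := edgeSet_mono le_sup_right
  have hvv : v ∈ G1.support ∩ G2.support := by rw [hsupp]; rfl
  have hv1 : v ∈ G1.support := hvv.1
  have hv2 : v ∈ G2.support := hvv.2
  have hrinj1 : Set.InjOn r G1.edgeSet := hr.mono hE1sub
  have hz : s(v, Sym2.Mem.other he1v) = e1s := Sym2.other_spec he1v
  set z := Sym2.Mem.other he1v with hzdef
  have hzadj : G1.Adj v z := (SimpleGraph.mem_edgeSet G1).mp (hz ▸ he1E)
  -- betweenness is the same in `G1 ⊔ G2` and in `G1` for edges of `G1`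
  have hBE : ∀ e f : Sym2 V, e ∈ G1.edgeSet → f ∈ G1.edgeSet →
      edgesBetween (G1 ⊔ G2) e f = edgesBetween G1 e f := by
    intro e f heE hfE
    ext x
    constructor
    · rintro ⟨hxE, hxe, hxf, huniv⟩
      obtain ⟨a, b, w, hew, hfw⟩ := conn2 h1 heE hfE
      obtain ⟨w', hw'⟩ := transfer_mem hle1 w
      have hx1 : x ∈ G1.edgeSet := by
        have := huniv a b w' (by rw [hw']; exact hew) (by rw [hw']; exact hfw)
        rw [hw'] at this
        exact w.edges_subset_edgeSet this
      refine ⟨hx1, hxe, hxf, ?_⟩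
      intro a b W hE hF
      obtain ⟨W', hW'⟩ := transfer_mem hle1 W
      have := huniv a b W' (by rw [hW']; exact hE) (by rw [hW']; exact hF)
      rwa [hW'] at this
    · rintro ⟨hx1, hxe, hxf, huniv⟩
      refine ⟨hE1sub hx1, hxe, hxf, ?_⟩
      intro a b W hE hF
      have hE' := mem_projW_edges hsupp W hE heE
      have hF' := mem_projW_edges hsupp W hF hfE
      exact projW_edges_subset hsupp W x (huniv _ _ (projW hsupp W) hE' hF')
  -- adjacent-superior transfer for G1-edges
  have hAS : ∀ f g : Sym2 V, f ∈ G1.edgeSet → g ∈ G1.edgeSet →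
      (AdjSup (G1 ⊔ G2) r f g ↔ AdjSup G1 r f g) := by
    intro f g hf hg
    unfold AdjSup
    rw [hBE f g hf hg]
    constructor
    · rintro ⟨_, h2', h3'⟩; exact ⟨hg, h2', h3'⟩
    · rintro ⟨_, h2', h3'⟩; exact ⟨hE1sub hg, h2', h3'⟩
  -- a non-spine edge of G1 has no adjacent superior in G2
  have hNoE2 : ∀ f, f ∈ G1.edgeSet → f ∉ spine G1 r e1s → ∀ g ∈ G2.edgeSet,
      ¬ AdjSup (G1 ⊔ G2) r f g := by
    intro f hfE hfs g hgE2 hA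
    obtain ⟨hgE, hrfg, hbound⟩ := hA
    have hfne : f ≠ e1s := by
      rintro rfl
      exact hfs Relation.ReflTransGen.refl
    -- (ii) : edges between e1s and f in G1 are between f and g in the merge
    have hii : ∀ x ∈ edgesBetween G1 e1s f, x ∈ edgesBetween (G1 ⊔ G2) f g := by
      intro x hx
      have hxE1 : x ∈ G1.edgeSet := hx.1
      refine ⟨hE1sub hxE1, hx.2.2.1, ?_, ?_⟩
      · rintro rfl
        exact Set.disjoint_left.mp hdisj hxE1 hgE2
      · intro a b W hFW hGW
        have hvW : v ∈ W.support := cross_v hsupp hdisj W hFW hfE hGW hgE2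
        have hfW' : f ∈ (projW hsupp W).edges := mem_projW_edges hsupp W hFW hfE
        have hvW' : v ∈ (projW hsupp W).support := by
          have := mem_projW_support hsupp W hvW
          rwa [piv_v] at this
        obtain ⟨W'', hW1, hW2, hW3⟩ := insert_loop (projW hsupp W) hvW' hzadj
        have hxW'' : x ∈ W''.edges := hx.2.2.2 _ _ W'' (hz ▸ hW1) (hW2 f hfW')
        rcases hW3 x hxW'' with h | h
        · exact projW_edges_subset hsupp W x h
        · exfalso
          rw [← hz] at hx
          exact hx.2.1 h
    -- (i) : r e1s < r f
    have hi : r e1s < r f := by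
      have hne_r : r e1s ≠ r f := fun hh => hfne (hrinj1 hfE he1E hh.symm)
      by_cases hvf : v ∈ f
      · exact lt_of_le_of_ne (he1min f hfE hvf) hne_r
      · -- there is an edge of G1 at v between f and g
        obtain ⟨⟨u1, u2⟩, hu⟩ := f.exists_rep
        have hu1f : u1 ∈ f := by rw [← hu]; simp
        have hu1s : u1 ∈ G1.support := edge_endpoint_support hfE hu1f
        have hvu1 : v ≠ u1 := fun hh => hvf (hh ▸ hu1f)
        obtain ⟨pw⟩ := exists_walk_support h1 hu1s hv1
        have hrevpath : pw.toPath.val.reverse.IsPath := pw.toPath.property.reverse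
        obtain ⟨z0, hadj0, Q1, hQdec⟩ := Walk.exists_eq_cons_of_ne hvu1 pw.toPath.val.reverse
        have hz0E : s(v, z0) ∈ G1.edgeSet := (SimpleGraph.mem_edgeSet G1).mpr hadj0
        have hQ1nb : s(v, z0) ∉ Q1.edges := by
          rw [hQdec] at hrevpath
          have := hrevpath.edges_nodup
          simp only [Walk.edges_cons, List.nodup_cons] at this
          exact this.1
        have hh0 : s(v, z0) ∈ edgesBetween (G1 ⊔ G2) f g := by
          refine ⟨hE1sub hz0E, ?_, ?_, ?_⟩
          · intro hh
            exact hvf (hh ▸ Sym2.mem_mk_left v z0)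
          · intro hh
            exact Set.disjoint_left.mp hdisj (hh ▸ hz0E) hgE2
          · intro a b W hFW hGW
            by_contra habs
            have hu1W : u1 ∈ W.support := mem_support_of_mem_edges W hFW hu1f
            obtain ⟨⟨g1, g2⟩, hg⟩ := g.exists_rep
            have hg1g : g1 ∈ g := by rw [← hg]; simp
            have hg1W : g1 ∈ W.support := mem_support_of_mem_edges W hGW hg1g
            have hg1s2 : g1 ∈ G2.support := edge_endpoint_support hgE2 hg1g
            obtain ⟨Wub, hWub⟩ := exists_subwalk W hu1W hg1W
            obtain ⟨R⟩ := exists_walk_support h2 hg1s2 hv2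
            obtain ⟨Q1', hQ1'⟩ := transfer_mem hle1 Q1
            obtain ⟨R', hR'⟩ := transfer_mem (le_sup_right : G2 ≤ G1 ⊔ G2) R
            have : False := by
              apply bridge1 h1 hsupp (show s(z0, v) ∈ G1.edgeSet by rwa [Sym2.eq_swap])
                (Q1'.append (Wub.append R'))
              intro hmem
              rw [Walk.edges_append, Walk.edges_append] at hmem
              rcases List.mem_append.mp hmem with hmem1 | hmem1
              · rw [hQ1'] at hmem1
                exact hQ1nb (by rwa [Sym2.eq_swap] at hmem1)
              · rcases List.mem_append.mp hmem1 with hmem2 | hmem2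
                · exact habs (by
                    have := hWub _ hmem2
                    rwa [Sym2.eq_swap] at this)
                · have : s(z0, v) ∈ G2.edgeSet := by
                    rw [hR'] at hmem2
                    exact R.edges_subset_edgeSet hmem2
                  exact Set.disjoint_left.mp hdisj (by rwa [Sym2.eq_swap] at hz0E ⊢) this
            exact this
        have := hbound _ hh0
        have := he1min s(v, z0) hz0E (Sym2.mem_mk_left v z0)
        omega
    have hsp : f ∈ spine G1 r e1s :=
      spine_ascend hrinj1 (fun e f he hf => conn2 h1 he hf) (r f - r e1s) e1s f he1E hfE hi
        (le_refl _) (fun x hx => hbound x (hii x hx))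
    exact hfs hsp
  -- assemble the equivalence
  intro f hfE hfs g
  constructor
  · rintro ⟨hA, hmin⟩
    have hgE1 : g ∈ G1.edgeSet := by
      rcases ((edgeSet_sup G1 G2) ▸ hA.1 : g ∈ G1.edgeSet ∪ G2.edgeSet) with h | h
      · exact h
      · exact absurd hA (hNoE2 f hfE hfs g h)
    refine ⟨(hAS f g hfE hgE1).mp hA, ?_⟩
    intro g' hg'
    exact hmin g' ((hAS f g' hfE hg'.1).mpr hg')
  · rintro ⟨hA, hmin⟩
    refine ⟨(hAS f g hfE hA.1).mpr hA, ?_⟩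
    intro g' hg'
    have hg'E1 : g' ∈ G1.edgeSet := by
      rcases ((edgeSet_sup G1 G2) ▸ hg'.1 : g' ∈ G1.edgeSet ∪ G2.edgeSet) with h | h
      · exact h
      · exact absurd hg' (hNoE2 f hfE hfs g' h)
    exact hmin g' ((hAS f g' hfE hg'E1).mp hg')

end Merge3

end AuxSLD

/- Merge setting: `G1` and `G2` are finite trees (on their supports) over a
common ambient vertex type, sharing exactly the vertex `v` and no edges, so
`G1 ⊔ G2` is a tree. A single injective rank function `r` is given on the
edges of `G1 ⊔ G2`. `e1s` and `e2s` are the minimum-rank edges incident to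
`v` in `G1` and `G2` respectively. -/

variable [Fintype V] (G1 G2 : SimpleGraph V) (v : V) (r : Sym2 V → ℕ)
  (e1s e2s : Sym2 V)

/-- Lemma 3.4: every edge of `G1` not on `spine1(e1*)` is protected under the
merge: its SLD parent in `G = G1 ⊔ G2` equals its SLD parent in `G1` (in
particular one is defined iff the other is); symmetrically for `G2`. -/
theorem stmt6
    (h1 : (G1.induce G1.support).IsTree) (h2 : (G2.induce G2.support).IsTree)
    (hne1 : G1.edgeSet.Nonempty) (hne2 : G2.edgeSet.Nonempty)
    (hsupp : G1.support ∩ G2.support = {v})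
    (hdisj : Disjoint G1.edgeSet G2.edgeSet)
    (hr : Set.InjOn r (G1 ⊔ G2).edgeSet)
    (he1 : e1s ∈ G1.edgeSet ∧ v ∈ e1s ∧ ∀ f ∈ G1.edgeSet, v ∈ f → r e1s ≤ r f)
    (he2 : e2s ∈ G2.edgeSet ∧ v ∈ e2s ∧ ∀ f ∈ G2.edgeSet, v ∈ f → r e2s ≤ r f) :
    (∀ f ∈ G1.edgeSet, f ∉ spine G1 r e1s →
      ∀ g, IsParent (G1 ⊔ G2) r f g ↔ IsParent G1 r f g) ∧
    (∀ f ∈ G2.edgeSet, f ∉ spine G2 r e2s →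
      ∀ g, IsParent (G1 ⊔ G2) r f g ↔ IsParent G2 r f g) := by
  constructor
  · exact main_half G1 G2 v r e1s h1 h2 hsupp hdisj hr he1
  · have hsupp' : G2.support ∩ G1.support = {v} := by rw [Set.inter_comm]; exact hsupp
    have hr' : Set.InjOn r (G2 ⊔ G1).edgeSet := by rw [sup_comm]; exact hr
    have hmain := main_half G2 G1 v r e2s h2 h1 hsupp' hdisj.symm hr' he2
    intro f hf hfs g
    rw [show G1 ⊔ G2 = G2 ⊔ G1 from sup_comm G1 G2]
    exact hmain f hf hfs g
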